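/- Let (R, m) be a Noetherian local ring whose punctured spectrum Spec(R) \ {m} is disconnected (as a topological space with the Zariski topology). Then depth(R) = depth(m, R) ≤ 1. -/
import Mathlib

open scoped Pointwise

namespace DepthDisconnAux

variable {R : Type*} [CommRing R]

/-- cancellation by powers of a regular element -/
lemma pow_cancel {x : R} (hx : ∀ a b : R, x * a = x * b → a = b) :
    ∀ (k : ℕ) (a b : R), x ^ k * a = x ^ k * b → a = b := by
  intro k
  induction k with
  | zero => intro a b h; simpa using h
  | succ k ih =>
    intro a b h
    apply ih
    apply hx
    calc x * (x ^ k * a) = x ^ (k + 1) * a := by ring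
    _ = x ^ (k + 1) * b := h
    _ = x * (x ^ k * b) := by ring

/-- powers of `y` are regular modulo powers of `x`, given a regular pair. -/
lemma pow_reg {x y : R} (hx : ∀ a b : R, x * a = x * b → a = b)
    (hy : ∀ a : R, (∃ c, y * a = x * c) → ∃ d, a = x * d) :
    ∀ (i j : ℕ) (a : R), (∃ c, y ^ j * a = x ^ i * c) → ∃ d, a = x ^ i * d := by
  have key : ∀ (i : ℕ) (a : R), (∃ c, y * a = x ^ i * c) → ∃ d, a = x ^ i * d := by
    intro i
    induction i with
    | zero => intro a _; exact ⟨a, by ring⟩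
    | succ i ih =>
      rintro a ⟨c, hc⟩
      obtain ⟨a₁, ha₁⟩ := hy a ⟨x ^ i * c, by rw [hc]; ring⟩
      have h2 : y * a₁ = x ^ i * c := by
        apply hx
        calc x * (y * a₁) = y * (x * a₁) := by ring
        _ = x ^ (i + 1) * c := by rw [← ha₁, hc]
        _ = x * (x ^ i * c) := by ring
      obtain ⟨d, hd⟩ := ih a₁ ⟨c, h2⟩
      exact ⟨d, by rw [ha₁, hd]; ring⟩
  intro i j
  induction j with
  | zero => rintro a ⟨c, hc⟩; exact ⟨c, by simpa using hc⟩
  | succ j ih =>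
    rintro a ⟨c, hc⟩
    exact ih a (key i (y ^ j * a) ⟨c, by rw [← hc]; ring⟩)

/-- binomial splitting: if `(a*b)^t = 0` then `(a+b)^(2t)` splits as a sum of a
multiple of `a^t` and a multiple of `b^t` whose product is zero. -/
lemma split {a b : R} {t : ℕ} (h : (a * b) ^ t = 0) :
    ∃ α β : R, (a + b) ^ (2 * t) = a ^ t * α + b ^ t * β ∧ (a ^ t * α) * (b ^ t * β) = 0 := by
  classical
  set n := 2 * t with hn
  have hpow : (a + b) ^ n = ∑ i ∈ Finset.range (n + 1), a ^ i * b ^ (n - i) * (n.choose i) :=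
    add_pow a b n
  rw [← Finset.sum_filter_add_sum_filter_not (Finset.range (n+1)) (fun i => t ≤ i)] at hpow
  refine ⟨∑ i ∈ (Finset.range (n+1)).filter (fun i => t ≤ i),
            a ^ (i - t) * b ^ (n - i) * (n.choose i),
          ∑ i ∈ (Finset.range (n+1)).filter (fun i => ¬ t ≤ i),
            a ^ i * b ^ (n - i - t) * (n.choose i), ?_, ?_⟩
  · rw [hpow]
    congr 1
    · rw [Finset.mul_sum]
      apply Finset.sum_congr rfl
      intro i hi
      simp only [Finset.mem_filter, Finset.mem_range] at hi
      have : a ^ i = a ^ t * a ^ (i - t) := by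
        rw [← pow_add]
        congr 1
        omega
      rw [this]; ring
    · rw [Finset.mul_sum]
      apply Finset.sum_congr rfl
      intro i hi
      simp only [Finset.mem_filter, Finset.mem_range] at hi
      have : b ^ (n - i) = b ^ t * b ^ (n - i - t) := by
        rw [← pow_add]
        congr 1
        omega
      rw [this]; ring
  · calc (a ^ t * ∑ i ∈ (Finset.range (n+1)).filter (fun i => t ≤ i),
            a ^ (i - t) * b ^ (n - i) * (n.choose i)) *
         (b ^ t * ∑ i ∈ (Finset.range (n+1)).filter (fun i => ¬ t ≤ i),
            a ^ i * b ^ (n - i - t) * (n.choose i))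
        = (a * b) ^ t * ((∑ i ∈ (Finset.range (n+1)).filter (fun i => t ≤ i),
            a ^ (i - t) * b ^ (n - i) * (n.choose i)) *
          (∑ i ∈ (Finset.range (n+1)).filter (fun i => ¬ t ≤ i),
            a ^ i * b ^ (n - i - t) * (n.choose i))) := by rw [mul_pow]; ring
    _ = 0 := by rw [h, zero_mul]


/-- The key dichotomy: idempotent splitting. -/
lemma core [IsLocalRing R] {x y s t' A B C D : R} {M : ℕ}
    (hx : ∀ a b : R, x * a = x * b → a = b)
    (hreg : ∀ (i j : ℕ) (a : R), (∃ c, y ^ j * a = x ^ i * c) → ∃ d, a = x ^ i * d)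
    (hs : s = x ^ M) (ht : ∃ N, t' = y ^ N)
    (hAB : A + B = s) (hAB0 : A * B = 0)
    (hCD : C + D = t') (hCD0 : C * D = 0)
    (hAD : ∃ n, (A * D) ^ n = 0) (hCB : ∃ n, (C * B) ^ n = 0) :
    A = 0 ∨ A = s := by
  have hxpow := pow_cancel hx
  have hA2 : s * A = A * A := by linear_combination (-A) * hAB + hAB0
  have hB2 : s * B = B * B := by linear_combination (-B) * hAB + hAB0
  have hC2 : t' * C = C * C := by linear_combination (-C) * hCD + hCD0
  have hD2 : t' * D = D * D := by linear_combination (-D) * hCD + hCD0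
  -- (A*D)^(k+1) = (s*t')^k * (A*D), similarly for C*B
  have hADpow : ∀ k : ℕ, (A * D) ^ (k + 1) = (s * t') ^ k * (A * D) := by
    intro k
    induction k with
    | zero => simp
    | succ k ih =>
      calc (A * D) ^ (k + 1 + 1) = (A * D) ^ (k + 1) * (A * D) := by rw [pow_succ]
      _ = (s * t') ^ k * (A * D) * (A * D) := by rw [ih]
      _ = (s * t') ^ (k + 1) * (A * D) := by
            rw [pow_succ]
            linear_combination (-((s * t') ^ k * (D * D))) * hA2 + (-((s * t') ^ k * (s * A))) * hD2
  have hCBpow : ∀ k : ℕ, (C * B) ^ (k + 1) = (s * t') ^ k * (C * B) := by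
    intro k
    induction k with
    | zero => simp
    | succ k ih =>
      calc (C * B) ^ (k + 1 + 1) = (C * B) ^ (k + 1) * (C * B) := by rw [pow_succ]
      _ = (s * t') ^ k * (C * B) * (C * B) := by rw [ih]
      _ = (s * t') ^ (k + 1) * (C * B) := by
            rw [pow_succ]
            linear_combination (-((s * t') ^ k * (B * B))) * hC2 + (-((s * t') ^ k * (t' * C))) * hB2
  obtain ⟨n1, hn1⟩ := hAD
  obtain ⟨n2, hn2⟩ := hCB
  -- kill both with a common power K
  set K := n1 + n2 with hK
  have hAD0 : (s * t') ^ K * (A * D) = 0 := by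
    have h1 : (A * D) ^ (n1 + 1) = 0 := by rw [pow_succ, hn1, zero_mul]
    have := hADpow n1
    rw [h1] at this
    calc (s * t') ^ K * (A * D) = (s * t') ^ n2 * ((s * t') ^ n1 * (A * D)) := by
          rw [hK, pow_add]; ring
    _ = (s * t') ^ n2 * 0 := by rw [← this]
    _ = 0 := mul_zero _
  have hCB0 : (s * t') ^ K * (C * B) = 0 := by
    have h1 : (C * B) ^ (n2 + 1) = 0 := by rw [pow_succ, hn2, zero_mul]
    have := hCBpow n2
    rw [h1] at this
    calc (s * t') ^ K * (C * B) = (s * t') ^ n1 * ((s * t') ^ n2 * (C * B)) := by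
          rw [hK, pow_add]; ring
    _ = (s * t') ^ n1 * 0 := by rw [← this]
    _ = 0 := mul_zero _
  -- A*t' - C*s = A*D - C*B, hence (s t')^K (A t') = (s t')^K (C s)
  have h5 : x ^ (M * K) * (t' ^ K * (A * t')) = x ^ (M * K) * (t' ^ K * (C * s)) := by
    have hsK : x ^ (M * K) = s ^ K := by rw [hs, pow_mul]
    rw [hsK]
    linear_combination hAD0 - hCB0 - (s ^ K * t' ^ K * A) * hCD + (s ^ K * t' ^ K * C) * hAB
  have h6 : t' ^ K * (A * t') = t' ^ K * (C * s) := hxpow (M * K) _ _ h5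
  -- so y^(N*(K+1)) * A = x^M * (t'^K * C), hence A = x^M * d
  obtain ⟨N, hN⟩ := ht
  have h7 : y ^ (N * (K + 1)) * A = x ^ M * (t' ^ K * C) := by
    have : y ^ (N * (K + 1)) = t' ^ (K + 1) := by rw [hN, ← pow_mul]
    rw [this, ← hs, pow_succ]
    linear_combination h6
  obtain ⟨d, hd⟩ := hreg M (N * (K + 1)) A ⟨t' ^ K * C, h7⟩
  rw [← hs] at hd
  -- d is idempotent
  have hidem : d * d = d := by
    have h8 : x ^ (2 * M) * (d * d) = x ^ (2 * M) * d := by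
      have hs2 : x ^ (2 * M) = s * s := by rw [hs, two_mul, pow_add]
      rw [hs2]
      linear_combination (-(A + s * d) + s) * hd - hA2
    exact hxpow (2 * M) _ _ h8
  rcases IsLocalRing.isUnit_or_isUnit_one_sub_self d with hu | hu
  · right
    have hd1 : d = 1 := hu.mul_left_cancel (by rw [hidem, mul_one])
    rw [hd, hd1, mul_one]
  · left
    have h10 : (1 - d) * d = (1 - d) * 0 := by linear_combination -hidem
    have hd0 : d = 0 := hu.mul_left_cancel h10
    rw [hd, hd0, mul_zero]
end DepthDisconnAux

open scoped Classical

/-- The depth of the `R`-module `M` along the ideal `I`: the supremum of lengths of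
`M`-regular sequences contained in `I`, with the convention that it is `⊤` if `IM = M`. -/
noncomputable def Ideal.depthENat {R : Type*} [CommRing R] (I : Ideal R)
    (M : Type*) [AddCommGroup M] [Module R M] : ℕ∞ :=
  if I • (⊤ : Submodule R M) = ⊤ then ⊤
  else sSup {n : ℕ∞ | ∃ rs : List R, (∀ r ∈ rs, r ∈ I) ∧
      RingTheory.Sequence.IsRegular M rs ∧ (rs.length : ℕ∞) = n}

/-- The height of an ideal: the infimum of the heights of the primes minimal over it. -/
noncomputable def Ideal.heightENat {R : Type*} [CommRing R] (I : Ideal R) : ℕ∞ :=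
  sInf {n : ℕ∞ | ∃ p : PrimeSpectrum R, p.asIdeal ∈ I.minimalPrimes ∧ Order.height p = n}

/-- If the punctured spectrum of a Noetherian local ring is disconnected,
then `depth R = depth(m, R) ≤ 1`. -/
theorem depth_le_one_of_disconnected_punctured_spectrum
    {R : Type u} [CommRing R] [IsNoetherianRing R] [IsLocalRing R]
    (hdisc : ¬ ConnectedSpace {p : PrimeSpectrum R // p ≠ IsLocalRing.closedPoint R}) :
    (IsLocalRing.maximalIdeal R).depthENat R ≤ 1 := by
  rw [Ideal.depthENat, if_neg (by
    rw [smul_eq_mul, Ideal.mul_top]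
    exact fun h => (IsLocalRing.maximalIdeal.isMaximal R).ne_top h)]
  apply sSup_le
  rintro n ⟨rs, hmem, hreg, rfl⟩
  rcases rs with _ | ⟨x, rs'⟩
  · simp
  rcases rs' with _ | ⟨y, rest⟩
  · simp
  exfalso
  -- extract regularity of the pair (x, y)
  obtain ⟨hx0, hW2⟩ :=
    (RingTheory.Sequence.isWeaklyRegular_cons_iff R x (y :: rest)).mp hreg.toIsWeaklyRegular
  obtain ⟨hy0, -⟩ :=
    (RingTheory.Sequence.isWeaklyRegular_cons_iff (QuotSMulTop x R) y rest).mp hW2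
  have hx' : ∀ a b : R, x * a = x * b → a = b := fun a b h => hx0 (by simpa [smul_eq_mul] using h)
  have hy' : ∀ a : R, (∃ c, y * a = x * c) → ∃ d, a = x * d := by
    rintro a ⟨c, hc⟩
    have h0 : (Submodule.Quotient.mk a : QuotSMulTop x R) = 0 := by
      apply hy0
      show y • (Submodule.Quotient.mk a : QuotSMulTop x R) = y • 0
      rw [smul_zero]
      have hmk : y • (Submodule.Quotient.mk a : QuotSMulTop x R) =
          Submodule.Quotient.mk (y • a) := rfl
      rw [hmk, Submodule.Quotient.mk_eq_zero]
      rw [← SetLike.mem_coe, Submodule.coe_pointwise_smul]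
      exact Set.mem_smul_set.mpr ⟨c, trivial, by simpa [smul_eq_mul] using hc.symm⟩
    rw [Submodule.Quotient.mk_eq_zero, ← SetLike.mem_coe,
      Submodule.coe_pointwise_smul] at h0
    obtain ⟨d, -, hd⟩ := Set.mem_smul_set.mp h0
    exact ⟨d, by simpa [smul_eq_mul] using hd.symm⟩
  have hxpow := DepthDisconnAux.pow_cancel hx'
  have hreg' := DepthDisconnAux.pow_reg hx' hy'
  have hx_mem : x ∈ IsLocalRing.maximalIdeal R := hmem x (by simp)
  have hy_mem : y ∈ IsLocalRing.maximalIdeal R := hmem y (by simp)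
  by_cases hne : Nonempty {p : PrimeSpectrum R // p ≠ IsLocalRing.closedPoint R}
  · -- punctured spectrum nonempty, hence not preconnected
    have hnp : ¬ PreconnectedSpace {p : PrimeSpectrum R // p ≠ IsLocalRing.closedPoint R} :=
      fun h => hdisc { toPreconnectedSpace := h, toNonempty := hne }
    rw [preconnectedSpace_iff_univ] at hnp
    unfold IsPreconnected at hnp
    push_neg at hnp
    obtain ⟨u, v, hu, hv, hcov, hune, hvne, hdisj⟩ := hnp
    obtain ⟨U₀, hU₀open, hU₀⟩ := isOpen_induced_iff.mp hu
    obtain ⟨V₀, hV₀open, hV₀⟩ := isOpen_induced_iff.mp hv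
    obtain ⟨I, hI⟩ := (PrimeSpectrum.isClosed_iff_zeroLocus_ideal _).mp hU₀open.isClosed_compl
    obtain ⟨J, hJ⟩ := (PrimeSpectrum.isClosed_iff_zeroLocus_ideal _).mp hV₀open.isClosed_compl
    -- basic translations
    have hmemI : ∀ p : PrimeSpectrum R, p ∉ U₀ ↔ I ≤ p.asIdeal := by
      intro p
      constructor
      · intro hp
        have : p ∈ PrimeSpectrum.zeroLocus (I : Set R) := by rw [← hI]; exact hp
        exact (PrimeSpectrum.mem_zeroLocus _ _).mp this
      · intro hp hmem'
        have : p ∈ PrimeSpectrum.zeroLocus (I : Set R) :=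
          (PrimeSpectrum.mem_zeroLocus _ _).mpr hp
        rw [← hI] at this
        exact this hmem'
    have hmemJ : ∀ p : PrimeSpectrum R, p ∉ V₀ ↔ J ≤ p.asIdeal := by
      intro p
      constructor
      · intro hp
        have : p ∈ PrimeSpectrum.zeroLocus (J : Set R) := by rw [← hJ]; exact hp
        exact (PrimeSpectrum.mem_zeroLocus _ _).mp this
      · intro hp hmem'
        have : p ∈ PrimeSpectrum.zeroLocus (J : Set R) :=
          (PrimeSpectrum.mem_zeroLocus _ _).mpr hp
        rw [← hJ] at this
        exact this hmem'
    -- h1 : no punctured point contains both I and J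
    have h1 : ∀ p : PrimeSpectrum R, p ≠ IsLocalRing.closedPoint R →
        I ≤ p.asIdeal → J ≤ p.asIdeal → False := by
      intro p hp hIp hJp
      have hcovp := hcov (Set.mem_univ (⟨p, hp⟩ : {p : PrimeSpectrum R // p ≠ IsLocalRing.closedPoint R}))
      cases hcovp with
      | inl h => exact (hmemI p).mpr hIp (by rwa [← hU₀] at h)
      | inr h => exact (hmemJ p).mpr hJp (by rwa [← hV₀] at h)
    -- h2 : every punctured point contains I or J
    have h2 : ∀ p : PrimeSpectrum R, p ≠ IsLocalRing.closedPoint R →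
        I ≤ p.asIdeal ∨ J ≤ p.asIdeal := by
      intro p hp
      have hnotin : (⟨p, hp⟩ : {p : PrimeSpectrum R // p ≠ IsLocalRing.closedPoint R}) ∉ u ∩ v := by
        intro hin
        have : (⟨p, hp⟩ : {p : PrimeSpectrum R // p ≠ IsLocalRing.closedPoint R}) ∈
            Set.univ ∩ (u ∩ v) := ⟨trivial, hin⟩
        rw [hdisj] at this
        exact this
      by_cases hpu : p ∈ U₀
      · right
        rw [← hmemJ p]
        intro hpv
        exact hnotin ⟨by rw [← hU₀] at *; exact hpu, by rw [← hV₀]; exact hpv⟩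
      · left
        exact (hmemI p).mp hpu
    -- nonemptiness of the two closed pieces
    have h3 : ∃ p : PrimeSpectrum R, p ≠ IsLocalRing.closedPoint R ∧
        I ≤ p.asIdeal ∧ ¬ J ≤ p.asIdeal := by
      obtain ⟨⟨p, hp⟩, -, hpv⟩ := hvne
      have hpV₀ : p ∈ V₀ := by rw [← hV₀] at hpv; exact hpv
      have hnJ : ¬ J ≤ p.asIdeal := fun h => ((hmemJ p).mpr h) hpV₀
      rcases h2 p hp with h | h
      · exact ⟨p, hp, h, hnJ⟩
      · exact absurd h hnJ
    have h4 : ∃ p : PrimeSpectrum R, p ≠ IsLocalRing.closedPoint R ∧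
        J ≤ p.asIdeal ∧ ¬ I ≤ p.asIdeal := by
      obtain ⟨⟨p, hp⟩, -, hpu⟩ := hune
      have hpU₀ : p ∈ U₀ := by rw [← hU₀] at hpu; exact hpu
      have hnI : ¬ I ≤ p.asIdeal := fun h => ((hmemI p).mpr h) hpU₀
      rcases h2 p hp with h | h
      · exact absurd h hnI
      · exact ⟨p, hp, h, hnI⟩
    have hIm : I ≤ IsLocalRing.maximalIdeal R := by
      obtain ⟨p, -, hIp, -⟩ := h3
      exact le_trans hIp (IsLocalRing.le_maximalIdeal p.isPrime.ne_top)
    have hJm : J ≤ IsLocalRing.maximalIdeal R := by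
      obtain ⟨p, -, hJp, -⟩ := h4
      exact le_trans hJp (IsLocalRing.le_maximalIdeal p.isPrime.ne_top)
    -- I ∩ J consists of nilpotents
    have hnil : ∀ z : R, z ∈ I → z ∈ J → IsNilpotent z := by
      intro z hzI hzJ
      rw [← mem_nilradical, nilradical_eq_sInf, Submodule.mem_sInf]
      intro p hp
      by_cases hpm : p = IsLocalRing.maximalIdeal R
      · rw [hpm]; exact hIm hzI
      · have hne' : (⟨p, hp⟩ : PrimeSpectrum R) ≠ IsLocalRing.closedPoint R := by
          intro h
          exact hpm (congrArg PrimeSpectrum.asIdeal h)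
        rcases h2 ⟨p, hp⟩ hne' with h | h
        · exact h hzI
        · exact h hzJ
    -- powers of elements of m land in I + J
    have hrad : ∀ z ∈ IsLocalRing.maximalIdeal R, ∃ n : ℕ, z ^ n ∈ I ⊔ J := by
      intro z hz
      have : z ∈ (I ⊔ J).radical := by
        rw [Ideal.radical_eq_sInf]
        rw [Submodule.mem_sInf]
        rintro p ⟨hle, hpr⟩
        by_cases hpm : p = IsLocalRing.maximalIdeal R
        · rw [hpm]; exact hz
        · exfalso
          have hne' : (⟨p, hpr⟩ : PrimeSpectrum R) ≠ IsLocalRing.closedPoint R := by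
            intro h
            exact hpm (congrArg PrimeSpectrum.asIdeal h)
          exact h1 ⟨p, hpr⟩ hne' (le_trans le_sup_left hle) (le_trans le_sup_right hle)
      exact this
    -- construct the idempotent splitting data for x
    obtain ⟨Nx, hNx⟩ := hrad x hx_mem
    obtain ⟨a, haI, b, hbJ, hab⟩ := Submodule.mem_sup.mp hNx
    obtain ⟨tx₀, htx₀⟩ := hnil (a * b) (I.mul_mem_right b haI) (J.mul_mem_left a hbJ)
    have hab0 : (a * b) ^ (tx₀ + 1) = 0 := by rw [pow_succ, htx₀, zero_mul]
    obtain ⟨α, β, hsplitx, hsplitx0⟩ := DepthDisconnAux.split hab0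
    set A := a ^ (tx₀ + 1) * α with hA
    set B := b ^ (tx₀ + 1) * β with hB
    have hA_I : A ∈ I := I.mul_mem_right α (I.pow_mem_of_mem haI _ (Nat.succ_pos _))
    have hB_J : B ∈ J := J.mul_mem_right β (J.pow_mem_of_mem hbJ _ (Nat.succ_pos _))
    have hABsum : A + B = x ^ (Nx * (2 * (tx₀ + 1))) := by
      rw [pow_mul, ← hab]
      exact hsplitx.symm
    -- same for y
    obtain ⟨Ny, hNy⟩ := hrad y hy_mem
    obtain ⟨c, hcI, e, heJ, hce⟩ := Submodule.mem_sup.mp hNy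
    obtain ⟨ty₀, hty₀⟩ := hnil (c * e) (I.mul_mem_right e hcI) (J.mul_mem_left c heJ)
    have hce0 : (c * e) ^ (ty₀ + 1) = 0 := by rw [pow_succ, hty₀, zero_mul]
    obtain ⟨γ, δ, hsplity, hsplity0⟩ := DepthDisconnAux.split hce0
    set C := c ^ (ty₀ + 1) * γ with hC
    set D := e ^ (ty₀ + 1) * δ with hD
    have hC_I : C ∈ I := I.mul_mem_right γ (I.pow_mem_of_mem hcI _ (Nat.succ_pos _))
    have hD_J : D ∈ J := J.mul_mem_right δ (J.pow_mem_of_mem heJ _ (Nat.succ_pos _))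
    have hCDsum : C + D = y ^ (Ny * (2 * (ty₀ + 1))) := by
      rw [pow_mul, ← hce]
      exact hsplity.symm
    -- nilpotency of the cross terms
    have hAD : ∃ n : ℕ, (A * D) ^ n = 0 :=
      hnil (A * D) (I.mul_mem_right D hA_I) (J.mul_mem_left A hD_J)
    have hCB : ∃ n : ℕ, (C * B) ^ n = 0 :=
      hnil (C * B) (I.mul_mem_right B hC_I) (J.mul_mem_left C hB_J)
    -- the dichotomy
    rcases DepthDisconnAux.core hx' hreg' rfl ⟨Ny * (2 * (ty₀ + 1)), rfl⟩
      hABsum hsplitx0 hCDsum hsplity0 hAD hCB with hA0 | hAs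
    · -- A = 0, so x-power lies in J, so I consists of nilpotents; contradicts h4
      have hxJ : x ^ (Nx * (2 * (tx₀ + 1))) ∈ J := by
        have : B = x ^ (Nx * (2 * (tx₀ + 1))) := by rw [← hABsum, hA0, zero_add]
        rw [← this]
        exact hB_J
      obtain ⟨p, hpne, hJp, hnIp⟩ := h4
      apply hnIp
      intro z hz
      obtain ⟨r, hr⟩ := hnil (z * x ^ (Nx * (2 * (tx₀ + 1))))
        (I.mul_mem_right _ hz) (J.mul_mem_left _ hxJ)
      have hkey : x ^ (Nx * (2 * (tx₀ + 1)) * r) * z ^ r =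
          (z * x ^ (Nx * (2 * (tx₀ + 1)))) ^ r := by ring
      have hzr : z ^ r = 0 := by
        apply hxpow (Nx * (2 * (tx₀ + 1)) * r)
        rw [mul_zero, hkey, hr]
      exact p.isPrime.mem_of_pow_mem r (by rw [hzr]; exact p.asIdeal.zero_mem)
    · -- A = x-power lies in I, so J consists of nilpotents; contradicts h3
      have hxI : x ^ (Nx * (2 * (tx₀ + 1))) ∈ I := by rw [← hAs]; exact hA_I
      obtain ⟨p, hpne, hIp, hnJp⟩ := h3
      apply hnJp
      intro z hz
      obtain ⟨r, hr⟩ := hnil (z * x ^ (Nx * (2 * (tx₀ + 1))))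
        (I.mul_mem_left _ hxI) (J.mul_mem_right _ hz)
      have hkey : x ^ (Nx * (2 * (tx₀ + 1)) * r) * z ^ r =
          (z * x ^ (Nx * (2 * (tx₀ + 1)))) ^ r := by ring
      have hzr : z ^ r = 0 := by
        apply hxpow (Nx * (2 * (tx₀ + 1)) * r)
        rw [mul_zero, hkey, hr]
      exact p.isPrime.mem_of_pow_mem r (by rw [hzr]; exact p.asIdeal.zero_mem)
  · -- punctured spectrum empty: x is nilpotent, contradicting regularity
    have hallp : ∀ p : Ideal R, p.IsPrime → x ∈ p := by
      intro p hp
      have hpe : (⟨p, hp⟩ : PrimeSpectrum R) = IsLocalRing.closedPoint R := by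
        by_contra hne'
        exact hne ⟨⟨⟨p, hp⟩, hne'⟩⟩
      have : p = IsLocalRing.maximalIdeal R := congrArg PrimeSpectrum.asIdeal hpe
      rw [this]
      exact hx_mem
    have hnilx : IsNilpotent x := by
      rw [← mem_nilradical, nilradical_eq_sInf, Submodule.mem_sInf]
      exact fun p hp => hallp p hp
    obtain ⟨n0, hn0⟩ := hnilx
    have h10 : (1 : R) = 0 := by
      apply hxpow n0
      rw [mul_one, mul_zero, hn0]
    exact one_ne_zero h10
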